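/- Fix a real symmetric n×n matrix K. The function (A, B) ↦ tr(K A^{1/2} K B^{1/2}) is jointly concave on pairs of positive semidefinite real symmetric n×n matrices: for all positive semidefinite symmetric A_1, B_1, A_2, B_2 and all λ ∈ [0,1], tr(K (λA_1 + (1−λ)A_2)^{1/2} K (λB_1 + (1−λ)B_2)^{1/2}) ≥ λ tr(K A_1^{1/2} K B_1^{1/2}) + (1−λ) tr(K A_2^{1/2} K B_2^{1/2}). (The p = 1/2 instance of Lieb's concavity theorem, which is the key ingredient in the proof of Lemma 2.) -/

import Mathlib

open Matrix BigOperators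

/- `msqrt A` is the positive semidefinite square root of `A` (junk value `0` when `A` is
not positive semidefinite). -/
open Classical in
noncomputable def msqrt {n : ℕ} (A : Matrix (Fin n) (Fin n) ℝ) : Matrix (Fin n) (Fin n) ℝ :=
  if h : A.PosSemidef then
    (h.1.eigenvectorUnitary : Matrix (Fin n) (Fin n) ℝ) *
      diagonal (fun i => Real.sqrt (h.1.eigenvalues i)) *
      (star h.1.eigenvectorUnitary : Matrix (Fin n) (Fin n) ℝ)
  else 0

/- The matrix geometric mean `X # Y = X^{1/2} (X^{-1/2} Y X^{-1/2})^{1/2} X^{1/2}`. -/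
noncomputable def gmean {n : ℕ} (X Y : Matrix (Fin n) (Fin n) ℝ) : Matrix (Fin n) (Fin n) ℝ :=
  msqrt X * msqrt (msqrt X⁻¹ * Y * msqrt X⁻¹) * msqrt X

open Kronecker
set_option linter.unusedSectionVars false
set_option linter.unusedVariables false
set_option maxHeartbeats 1000000

section helpers
variable {m : Type*} [Fintype m] [DecidableEq m]

lemma herm_t {A : Matrix m m ℝ} (h : A.IsHermitian) : Aᵀ = A := by
  rw [← Matrix.conjTranspose_eq_transpose_of_trivial]; exact h

lemma dot_self_nonneg' (v : m → ℝ) : 0 ≤ v ⬝ᵥ v :=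
  Finset.sum_nonneg fun _ _ => mul_self_nonneg _

lemma dot2 (A B : Matrix m m ℝ) (hA : Aᵀ = A) (x y : m → ℝ) :
    (A *ᵥ x) ⬝ᵥ (B *ᵥ y) = x ⬝ᵥ ((A * B) *ᵥ y) := by
  have h1 : A *ᵥ x = x ᵥ* A := by rw [← Matrix.mulVec_transpose, hA]
  rw [h1, ← Matrix.dotProduct_mulVec, Matrix.mulVec_mulVec]

lemma dot_flip (M : Matrix m m ℝ) (v w : m → ℝ) :
    v ⬝ᵥ (M *ᵥ w) = w ⬝ᵥ (Mᵀ *ᵥ v) := by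
  rw [Matrix.dotProduct_mulVec, dotProduct_comm, Matrix.mulVec_transpose]

lemma quad_expand (P Q : Matrix m m ℝ) (hP : Pᵀ = P) (hQ : Qᵀ = Q) (x y : m → ℝ) :
    0 ≤ x ⬝ᵥ ((P * P) *ᵥ x) + 2 * (x ⬝ᵥ ((P * Q) *ᵥ y)) + y ⬝ᵥ ((Q * Q) *ᵥ y) := by
  have h := dot_self_nonneg' (P *ᵥ x + Q *ᵥ y)
  rw [dotProduct_add, add_dotProduct, add_dotProduct, dot2 P P hP, dot2 P Q hP,
    dot2 Q P hQ, dot2 Q Q hQ] at h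
  have hc : y ⬝ᵥ ((Q * P) *ᵥ x) = x ⬝ᵥ ((P * Q) *ᵥ y) := by
    rw [dot_flip, Matrix.transpose_mul, hP, hQ]
  rw [hc] at h
  linarith

lemma diag_quad_le (f : m → ℝ) (hf : ∀ i, f i ≤ 1) (g : m → ℝ) :
    (Matrix.diagonal f *ᵥ g) ⬝ᵥ g ≤ g ⬝ᵥ g := by
  simp only [dotProduct, Matrix.mulVec_diagonal]
  refine Finset.sum_le_sum fun i _ => ?_
  nlinarith [mul_self_nonneg (g i), hf i]

lemma quad_le_of_unitary (U : Matrix m m ℝ) (f : m → ℝ)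
    (hU2 : U * Uᵀ = 1) (hf : ∀ i, f i ≤ 1) (v : m → ℝ) :
    v ⬝ᵥ ((U * Matrix.diagonal f * Uᵀ) *ᵥ v) ≤ v ⬝ᵥ v := by
  set g := Uᵀ *ᵥ v with hg
  have hL : v ⬝ᵥ ((U * Matrix.diagonal f * Uᵀ) *ᵥ v)
      = (Matrix.diagonal f *ᵥ g) ⬝ᵥ g := by
    rw [Matrix.mul_assoc, ← Matrix.mulVec_mulVec, dot_flip, ← Matrix.mulVec_mulVec, hg]
  have hR : v ⬝ᵥ v = g ⬝ᵥ g := by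
    rw [hg, dot_flip Uᵀ g v, Matrix.transpose_transpose, Matrix.mulVec_mulVec, hU2,
      Matrix.one_mulVec]
  rw [hL, hR]
  exact diag_quad_le f hf g

lemma quad_le_of_eigenvalues_le (W : Matrix m m ℝ) (hW : W.IsHermitian)
    (h : ∀ i, hW.eigenvalues i ≤ 1) (v : m → ℝ) : v ⬝ᵥ (W *ᵥ v) ≤ v ⬝ᵥ v := by
  have hstar : star (hW.eigenvectorUnitary : Matrix m m ℝ)
      = (hW.eigenvectorUnitary : Matrix m m ℝ)ᵀ := by
    rw [Matrix.star_eq_conjTranspose, Matrix.conjTranspose_eq_transpose_of_trivial]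
  have hdiag : Matrix.diagonal (RCLike.ofReal ∘ hW.eigenvalues)
      = Matrix.diagonal hW.eigenvalues := rfl
  have hU2 : (hW.eigenvectorUnitary : Matrix m m ℝ) * (hW.eigenvectorUnitary : Matrix m m ℝ)ᵀ
      = 1 := by
    rw [← hstar]; exact Unitary.coe_mul_star_self hW.eigenvectorUnitary
  calc v ⬝ᵥ (W *ᵥ v)
      = v ⬝ᵥ (((hW.eigenvectorUnitary : Matrix m m ℝ) * Matrix.diagonal hW.eigenvalues
          * (hW.eigenvectorUnitary : Matrix m m ℝ)ᵀ) *ᵥ v) := by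
        conv_lhs => rw [hW.spectral_theorem]
        rw [Unitary.conjStarAlgAut_apply, hstar, hdiag]
    _ ≤ v ⬝ᵥ v := quad_le_of_unitary _ _ hU2 h v

end helpers

variable {n : ℕ}

open scoped MatrixOrder in
lemma msqrt_eq {A : Matrix (Fin n) (Fin n) ℝ} (h : A.PosSemidef) : msqrt A = CFC.sqrt A := by
  rw [CFC.sqrt_eq_cfc, cfc_nnreal_eq_real _ A h.nonneg, h.1.cfc_eq, msqrt, dif_pos h,
    IsHermitian.cfc, Unitary.conjStarAlgAut_apply]
  congr 3
  funext i
  simp [Real.coe_sqrt, Real.coe_toNNReal', h.eigenvalues_nonneg i]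

open scoped MatrixOrder in
lemma msqrt_posSemidef {A : Matrix (Fin n) (Fin n) ℝ} (h : A.PosSemidef) :
    (msqrt A).PosSemidef := by rw [msqrt_eq h]; exact (CFC.sqrt_nonneg A).posSemidef

open scoped MatrixOrder in
lemma msqrt_mul_self {A : Matrix (Fin n) (Fin n) ℝ} (h : A.PosSemidef) :
    msqrt A * msqrt A = A := by rw [msqrt_eq h]; exact CFC.sqrt_mul_sqrt_self A h.nonneg

open scoped MatrixOrder in
lemma msqrt_unique {A S : Matrix (Fin n) (Fin n) ℝ} (hA : A.PosSemidef) (hS : S.PosSemidef)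
    (h : S * S = A) : msqrt A = S := by
  rw [msqrt_eq hA]
  exact (CFC.sqrt_eq_iff A S hA.nonneg hS.nonneg).mpr h

lemma msqrt_t {A : Matrix (Fin n) (Fin n) ℝ} (h : A.PosSemidef) :
    (msqrt A)ᵀ = msqrt A := herm_t (msqrt_posSemidef h).isHermitian

lemma msqrt_posDef {A : Matrix (Fin n) (Fin n) ℝ} (h : A.PosDef) : (msqrt A).PosDef := by
  have hS := msqrt_posSemidef h.posSemidef
  have hdet : (msqrt A).det ≠ 0 := by
    have hd : (msqrt A).det * (msqrt A).det = A.det := by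
      rw [← det_mul, msqrt_mul_self h.posSemidef]
    intro h0
    rw [h0, mul_zero] at hd
    exact (ne_of_gt h.det_pos) hd.symm
  refine PosDef.of_dotProduct_mulVec_pos hS.isHermitian fun x hx => ?_
  rcases lt_or_eq_of_le (hS.dotProduct_mulVec_nonneg x) with hlt | heq
  · exact hlt
  · exfalso
    apply hx
    have h0 : msqrt A *ᵥ x = 0 := (hS.dotProduct_mulVec_zero_iff x).mp heq.symm
    have := congrArg (fun y => (msqrt A)⁻¹ *ᵥ y) h0
    simpa [mulVec_mulVec, nonsing_inv_mul _ (isUnit_iff_ne_zero.mpr hdet)] using this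

lemma superadd {X Y U V : Matrix (Fin n) (Fin n) ℝ}
    (hX : X.PosSemidef) (hY : Y.PosSemidef) (hU : U.PosSemidef) (hV : V.PosSemidef)
    (hC : (X + Y).PosDef) (hD : (U + V).PosDef) (v : Fin n × Fin n → ℝ) :
    v ⬝ᵥ ((msqrt X ⊗ₖ msqrt U + msqrt Y ⊗ₖ msqrt V) *ᵥ v)
      ≤ v ⬝ᵥ ((msqrt (X + Y) ⊗ₖ msqrt (U + V)) *ᵥ v) := by
  set a := msqrt X with ha
  set b := msqrt Y with hb
  set p := msqrt U with hp
  set q := msqrt V with hq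
  set c := msqrt (X + Y) with hcdef
  set d := msqrt (U + V) with hddef
  have hcPD : c.PosDef := msqrt_posDef hC
  have hdPD : d.PosDef := msqrt_posDef hD
  set c2 := msqrt c with hc2def
  set d2 := msqrt d with hd2def
  have hc2PD : c2.PosDef := msqrt_posDef hcPD
  have hd2PD : d2.PosDef := msqrt_posDef hdPD
  -- transposes
  have haT : aᵀ = a := msqrt_t hX
  have hbT : bᵀ = b := msqrt_t hY
  have hpT : pᵀ = p := msqrt_t hU
  have hqT : qᵀ = q := msqrt_t hV
  have hcT : cᵀ = c := msqrt_t hC.posSemidef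
  have hdT : dᵀ = d := msqrt_t hD.posSemidef
  have hc2T : c2ᵀ = c2 := msqrt_t hcPD.posSemidef
  have hd2T : d2ᵀ = d2 := msqrt_t hdPD.posSemidef
  have hcinvT : (c⁻¹)ᵀ = c⁻¹ := herm_t hcPD.isHermitian.inv
  have hdinvT : (d⁻¹)ᵀ = d⁻¹ := herm_t hdPD.isHermitian.inv
  have hc2invT : (c2⁻¹)ᵀ = c2⁻¹ := herm_t hc2PD.isHermitian.inv
  have hd2invT : (d2⁻¹)ᵀ = d2⁻¹ := herm_t hd2PD.isHermitian.inv
  -- multiplicative facts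
  have hcdetu : IsUnit c.det := isUnit_iff_ne_zero.mpr (ne_of_gt hcPD.det_pos)
  have hddetu : IsUnit d.det := isUnit_iff_ne_zero.mpr (ne_of_gt hdPD.det_pos)
  have hc2detu : IsUnit c2.det := isUnit_iff_ne_zero.mpr (ne_of_gt hc2PD.det_pos)
  have hd2detu : IsUnit d2.det := isUnit_iff_ne_zero.mpr (ne_of_gt hd2PD.det_pos)
  have hcc : c * c = X + Y := msqrt_mul_self hC.posSemidef
  have hdd : d * d = U + V := msqrt_mul_self hD.posSemidef
  have hc2c2 : c2 * c2 = c := msqrt_mul_self hcPD.posSemidef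
  have hd2d2 : d2 * d2 = d := msqrt_mul_self hdPD.posSemidef
  have hcinv : c⁻¹ * c = 1 := nonsing_inv_mul c hcdetu
  have hcinv' : c * c⁻¹ = 1 := mul_nonsing_inv c hcdetu
  have hdinv : d⁻¹ * d = 1 := nonsing_inv_mul d hddetu
  have hdinv' : d * d⁻¹ = 1 := mul_nonsing_inv d hddetu
  have hc2inv : c2⁻¹ * c2 = 1 := nonsing_inv_mul c2 hc2detu
  have hc2inv' : c2 * c2⁻¹ = 1 := mul_nonsing_inv c2 hc2detu
  have hd2inv : d2⁻¹ * d2 = 1 := nonsing_inv_mul d2 hd2detu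
  have hd2inv' : d2 * d2⁻¹ = 1 := mul_nonsing_inv d2 hd2detu
  have hc2ii : c2⁻¹ * c2⁻¹ = c⁻¹ := by rw [← Matrix.mul_inv_rev, hc2c2]
  have hd2ii : d2⁻¹ * d2⁻¹ = d⁻¹ := by rw [← Matrix.mul_inv_rev, hd2d2]
  -- big matrices
  set G : Matrix (Fin n × Fin n) (Fin n × Fin n) ℝ := a ⊗ₖ p + b ⊗ₖ q with hGdef
  set E : Matrix (Fin n × Fin n) (Fin n × Fin n) ℝ := c2⁻¹ ⊗ₖ d2⁻¹ with hEdef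
  set F : Matrix (Fin n × Fin n) (Fin n × Fin n) ℝ := c2 ⊗ₖ d2 with hFdef
  set S : Matrix (Fin n × Fin n) (Fin n × Fin n) ℝ := c2⁻¹ ⊗ₖ d2 with hSdef
  set Si : Matrix (Fin n × Fin n) (Fin n × Fin n) ℝ := c2 ⊗ₖ d2⁻¹ with hSidef
  set W : Matrix (Fin n × Fin n) (Fin n × Fin n) ℝ := E * G * E with hWdef
  set M : Matrix (Fin n × Fin n) (Fin n × Fin n) ℝ := (c⁻¹ ⊗ₖ (1 : Matrix (Fin n) (Fin n) ℝ)) * G * ((1 : Matrix (Fin n) (Fin n) ℝ) ⊗ₖ d⁻¹) with hMdef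
  have hGT : Gᵀ = G := by
    rw [hGdef, Matrix.transpose_add, ← Matrix.kroneckerMap_transpose,
      ← Matrix.kroneckerMap_transpose, haT, hbT, hpT, hqT]
  have hET : Eᵀ = E := by rw [hEdef, ← Matrix.kroneckerMap_transpose, hc2invT, hd2invT]
  have hFT : Fᵀ = F := by rw [hFdef, ← Matrix.kroneckerMap_transpose, hc2T, hd2T]
  have hWT : Wᵀ = W := by
    rw [hWdef, Matrix.transpose_mul, Matrix.transpose_mul, hET, hGT, Matrix.mul_assoc]
  have hW : W.IsHermitian := by
    rw [Matrix.IsHermitian, Matrix.conjTranspose_eq_transpose_of_trivial, hWT]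
  have hFE : F * E = 1 := by
    rw [hFdef, hEdef, ← Matrix.mul_kronecker_mul, hc2inv', hd2inv', Matrix.one_kronecker_one]
  have hEF : E * F = 1 := by
    rw [hFdef, hEdef, ← Matrix.mul_kronecker_mul, hc2inv, hd2inv, Matrix.one_kronecker_one]
  have hFF : F * F = c ⊗ₖ d := by
    rw [hFdef, ← Matrix.mul_kronecker_mul, hc2c2, hd2d2]
  have hSiS : Si * S = 1 := by
    rw [hSdef, hSidef, ← Matrix.mul_kronecker_mul, hc2inv', hd2inv, Matrix.one_kronecker_one]
  have hSim : S * W * Si = M := by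
    have hSE : S * E = c⁻¹ ⊗ₖ (1 : Matrix (Fin n) (Fin n) ℝ) := by
      rw [hSdef, hEdef, ← Matrix.mul_kronecker_mul, hc2ii, hd2inv']
    have hESi : E * Si = (1 : Matrix (Fin n) (Fin n) ℝ) ⊗ₖ d⁻¹ := by
      rw [hEdef, hSidef, ← Matrix.mul_kronecker_mul, hc2inv, hd2ii]
    rw [hWdef, hMdef, ← hSE, ← hESi]
    noncomm_ring
  -- block inequality
  have hblock : ∀ x y : Fin n × Fin n → ℝ, 2 * (x ⬝ᵥ (G *ᵥ y))
      ≤ x ⬝ᵥ (((X + Y) ⊗ₖ (1 : Matrix (Fin n) (Fin n) ℝ)) *ᵥ x)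
        + y ⬝ᵥ (((1 : Matrix (Fin n) (Fin n) ℝ) ⊗ₖ (U + V)) *ᵥ y) := by
    intro x y
    have hT1 : (a ⊗ₖ (1 : Matrix (Fin n) (Fin n) ℝ))ᵀ = a ⊗ₖ 1 := by
      rw [← Matrix.kroneckerMap_transpose, haT, Matrix.transpose_one]
    have hT1' : (b ⊗ₖ (1 : Matrix (Fin n) (Fin n) ℝ))ᵀ = b ⊗ₖ 1 := by
      rw [← Matrix.kroneckerMap_transpose, hbT, Matrix.transpose_one]
    have hT2 : ((1 : Matrix (Fin n) (Fin n) ℝ) ⊗ₖ p)ᵀ = 1 ⊗ₖ p := by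
      rw [← Matrix.kroneckerMap_transpose, hpT, Matrix.transpose_one]
    have hT2' : ((1 : Matrix (Fin n) (Fin n) ℝ) ⊗ₖ q)ᵀ = 1 ⊗ₖ q := by
      rw [← Matrix.kroneckerMap_transpose, hqT, Matrix.transpose_one]
    have haa : a * a = X := by rw [ha]; exact msqrt_mul_self hX
    have hbb : b * b = Y := by rw [hb]; exact msqrt_mul_self hY
    have hpp : p * p = U := by rw [hp]; exact msqrt_mul_self hU
    have hqq : q * q = V := by rw [hq]; exact msqrt_mul_self hV
    have h1 := quad_expand (a ⊗ₖ 1) ((1 : Matrix (Fin n) (Fin n) ℝ) ⊗ₖ p) hT1 hT2 x (-y)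
    have h2 := quad_expand (b ⊗ₖ 1) ((1 : Matrix (Fin n) (Fin n) ℝ) ⊗ₖ q) hT1' hT2' x (-y)
    rw [← Matrix.mul_kronecker_mul, ← Matrix.mul_kronecker_mul, ← Matrix.mul_kronecker_mul,
      haa, hpp] at h1
    rw [← Matrix.mul_kronecker_mul, ← Matrix.mul_kronecker_mul, ← Matrix.mul_kronecker_mul,
      hbb, hqq] at h2
    simp only [mul_one, one_mul] at h1 h2
    have hGy : G *ᵥ y = (a ⊗ₖ p) *ᵥ y + (b ⊗ₖ q) *ᵥ y := by
      rw [hGdef, Matrix.add_mulVec]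
    have hXY : ((X + Y) ⊗ₖ (1 : Matrix (Fin n) (Fin n) ℝ)) *ᵥ x
        = (X ⊗ₖ (1 : Matrix (Fin n) (Fin n) ℝ)) *ᵥ x + (Y ⊗ₖ 1) *ᵥ x := by
      rw [Matrix.add_kronecker, Matrix.add_mulVec]
    have hUV : ((1 : Matrix (Fin n) (Fin n) ℝ) ⊗ₖ (U + V)) *ᵥ y
        = ((1 : Matrix (Fin n) (Fin n) ℝ) ⊗ₖ U) *ᵥ y + (1 ⊗ₖ V) *ᵥ y := by
      rw [Matrix.kronecker_add, Matrix.add_mulVec]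
    rw [hGy, hXY, hUV, dotProduct_add, dotProduct_add, dotProduct_add]
    simp only [Matrix.mulVec_neg, dotProduct_neg, neg_dotProduct, neg_neg] at h1 h2
    linarith
  -- normalized block inequality
  have hblock2 : ∀ x y : Fin n × Fin n → ℝ,
      2 * (x ⬝ᵥ (M *ᵥ y)) ≤ x ⬝ᵥ x + y ⬝ᵥ y := by
    intro x y
    have hAT : (c⁻¹ ⊗ₖ (1 : Matrix (Fin n) (Fin n) ℝ))ᵀ = c⁻¹ ⊗ₖ 1 := by
      rw [← Matrix.kroneckerMap_transpose, hcinvT, Matrix.transpose_one]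
    have hBT : ((1 : Matrix (Fin n) (Fin n) ℝ) ⊗ₖ d⁻¹)ᵀ = 1 ⊗ₖ d⁻¹ := by
      rw [← Matrix.kroneckerMap_transpose, hdinvT, Matrix.transpose_one]
    have h := hblock ((c⁻¹ ⊗ₖ (1 : Matrix (Fin n) (Fin n) ℝ)) *ᵥ x)
      (((1 : Matrix (Fin n) (Fin n) ℝ) ⊗ₖ d⁻¹) *ᵥ y)
    -- first term
    rw [Matrix.mulVec_mulVec, dot2 _ _ hAT] at h
    -- cross term
    rw [Matrix.mulVec_mulVec, dot2 _ _ hAT] at h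
    -- second term
    rw [Matrix.mulVec_mulVec, dot2 _ _ hBT] at h
    have e1 : (c⁻¹ ⊗ₖ (1 : Matrix (Fin n) (Fin n) ℝ))
        * (((X + Y) ⊗ₖ (1 : Matrix (Fin n) (Fin n) ℝ)) * (c⁻¹ ⊗ₖ 1)) = 1 := by
      rw [← Matrix.mul_kronecker_mul, ← Matrix.mul_kronecker_mul, ← hcc]
      rw [show c⁻¹ * (c * c * c⁻¹) = c⁻¹ * c * (c * c⁻¹) by noncomm_ring, hcinv, hcinv']
      simp [Matrix.one_kronecker_one]
    have e2 : ((1 : Matrix (Fin n) (Fin n) ℝ) ⊗ₖ d⁻¹)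
        * (((1 : Matrix (Fin n) (Fin n) ℝ) ⊗ₖ (U + V)) * (1 ⊗ₖ d⁻¹)) = 1 := by
      rw [← Matrix.mul_kronecker_mul, ← Matrix.mul_kronecker_mul, ← hdd]
      rw [show d⁻¹ * (d * d * d⁻¹) = d⁻¹ * d * (d * d⁻¹) by noncomm_ring, hdinv, hdinv']
      simp [Matrix.one_kronecker_one]
    rw [e1, e2, Matrix.one_mulVec, Matrix.one_mulVec] at h
    have e3 : (c⁻¹ ⊗ₖ (1 : Matrix (Fin n) (Fin n) ℝ))
        * (G * ((1 : Matrix (Fin n) (Fin n) ℝ) ⊗ₖ d⁻¹)) = M := by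
      rw [hMdef, Matrix.mul_assoc]
    rw [e3] at h
    linarith
  -- eigenvalues of W are ≤ 1
  have heig : ∀ t, hW.eigenvalues t ≤ 1 := by
    intro t
    set u : Fin n × Fin n → ℝ := ⇑(hW.eigenvectorBasis t) with hu
    have hWu : W *ᵥ u = hW.eigenvalues t • u := hW.mulVec_eigenvectorBasis t
    set z := S *ᵥ u with hz
    have hzne : z ≠ 0 := by
      intro h0
      have : u = 0 := by
        have := congrArg (fun w => Si *ᵥ w) h0
        simpa [hz, Matrix.mulVec_mulVec, hSiS, Matrix.one_mulVec] using this
      apply hW.eigenvectorBasis.orthonormal.ne_zero t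
      ext i
      exact congrFun this i
    have hMz : M *ᵥ z = hW.eigenvalues t • z := by
      rw [← hSim, hz, Matrix.mulVec_mulVec, show S * W * Si * S = S * W * (Si * S) by
        noncomm_ring, hSiS, mul_one, ← Matrix.mulVec_mulVec, hWu, Matrix.mulVec_smul]
    have h := hblock2 z z
    rw [hMz, dotProduct_smul] at h
    have hzz : 0 < z ⬝ᵥ z := by
      rcases lt_or_eq_of_le (dot_self_nonneg' z) with h' | h'
      · exact h'
      · exact absurd (dotProduct_self_eq_zero.mp h'.symm) hzne
    have : hW.eigenvalues t * (z ⬝ᵥ z) ≤ 1 * (z ⬝ᵥ z) := by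
      rw [smul_eq_mul] at h; linarith
    exact le_of_mul_le_mul_right this hzz
  -- conclude
  have h := quad_le_of_eigenvalues_le W hW heig (F *ᵥ v)
  rw [Matrix.mulVec_mulVec, dot2 _ _ hFT, dot2 _ _ hFT, hFF] at h
  have hFWF : F * (W * F) = G := by
    rw [hWdef, show F * (E * G * E * F) = (F * E) * G * (E * F) by noncomm_ring, hFE, hEF,
      one_mul, mul_one]
  rw [hFWF] at h
  exact h

-- extra lemmas: smul, perturbation, trace identity
variable {n : ℕ}

lemma posSemidef_smul {A : Matrix (Fin n) (Fin n) ℝ} (hA : A.PosSemidef) {t : ℝ} (ht : 0 ≤ t) :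
    (t • A).PosSemidef := by
  constructor
  · show (t • A)ᴴ = t • A
    rw [Matrix.conjTranspose_smul, hA.1.eq, star_trivial]
  · intro x
    exact (hA.smul ht).2 x

lemma msqrt_smul {A : Matrix (Fin n) (Fin n) ℝ} (hA : A.PosSemidef) {t : ℝ} (ht : 0 ≤ t) :
    msqrt (t • A) = Real.sqrt t • msqrt A := by
  refine msqrt_unique (posSemidef_smul hA ht)
    (posSemidef_smul (msqrt_posSemidef hA) (Real.sqrt_nonneg t)) ?_
  rw [smul_mul_assoc, mul_smul_comm, smul_smul, Real.mul_self_sqrt ht, msqrt_mul_self hA]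

lemma smul_one_posSemidef {ε : ℝ} (hε : 0 ≤ ε) :
    (ε • (1 : Matrix (Fin n) (Fin n) ℝ)).PosSemidef := by
  rw [Matrix.smul_one_eq_diagonal]
  exact Matrix.PosSemidef.diagonal (fun i => hε)

lemma smul_one_posDef {ε : ℝ} (hε : 0 < ε) :
    (ε • (1 : Matrix (Fin n) (Fin n) ℝ)).PosDef := by
  rw [Matrix.smul_one_eq_diagonal]
  exact Matrix.PosDef.diagonal (fun i => hε)

noncomputable def pertSqrt {M : Matrix (Fin n) (Fin n) ℝ} (hM : M.PosSemidef) (ε : ℝ) :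
    Matrix (Fin n) (Fin n) ℝ :=
  (hM.1.eigenvectorUnitary : Matrix (Fin n) (Fin n) ℝ)
    * Matrix.diagonal (fun i => Real.sqrt (hM.1.eigenvalues i + ε))
    * star (hM.1.eigenvectorUnitary : Matrix (Fin n) (Fin n) ℝ)

lemma pertSqrt_continuous {M : Matrix (Fin n) (Fin n) ℝ} (hM : M.PosSemidef) :
    Continuous (fun ε => pertSqrt hM ε) := by
  unfold pertSqrt
  exact ((continuous_const.matrix_mul
    ((continuous_pi fun i => (Real.continuous_sqrt.comp (by continuity))).matrix_diagonal)).matrix_mul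
    continuous_const)

lemma pertSqrt_posSemidef {M : Matrix (Fin n) (Fin n) ℝ} (hM : M.PosSemidef) {ε : ℝ}
    (hε : 0 ≤ ε) : (pertSqrt hM ε).PosSemidef := by
  unfold pertSqrt
  rw [Matrix.star_eq_conjTranspose]
  exact (Matrix.PosSemidef.diagonal fun i => Real.sqrt_nonneg _).mul_mul_conjTranspose_same _

lemma pertSqrt_sq {M : Matrix (Fin n) (Fin n) ℝ} (hM : M.PosSemidef) {ε : ℝ} (hε : 0 ≤ ε) :
    pertSqrt hM ε * pertSqrt hM ε = M + ε • 1 := by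
  unfold pertSqrt
  set U : Matrix (Fin n) (Fin n) ℝ := (hM.1.eigenvectorUnitary : Matrix (Fin n) (Fin n) ℝ)
  have hU : star U * U = 1 := Unitary.coe_star_mul_self _
  have hU' : U * star U = 1 := Unitary.coe_mul_star_self _
  have key : (U * Matrix.diagonal (fun i => Real.sqrt (hM.1.eigenvalues i + ε)) * star U)
      * (U * Matrix.diagonal (fun i => Real.sqrt (hM.1.eigenvalues i + ε)) * star U)
      = U * Matrix.diagonal (fun i => hM.1.eigenvalues i + ε) * star U := by
    have hd : Matrix.diagonal (fun i => Real.sqrt (hM.1.eigenvalues i + ε))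
        * Matrix.diagonal (fun i => Real.sqrt (hM.1.eigenvalues i + ε))
        = Matrix.diagonal (fun i => hM.1.eigenvalues i + ε) := by
      rw [Matrix.diagonal_mul_diagonal]
      have hf : (fun i => Real.sqrt (hM.1.eigenvalues i + ε) * Real.sqrt (hM.1.eigenvalues i + ε))
          = fun i => hM.1.eigenvalues i + ε :=
        funext fun i => Real.mul_self_sqrt (by linarith [hM.eigenvalues_nonneg i])
      rw [hf]
    calc U * Matrix.diagonal (fun i => Real.sqrt (hM.1.eigenvalues i + ε)) * star U
        * (U * Matrix.diagonal (fun i => Real.sqrt (hM.1.eigenvalues i + ε)) * star U)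
        = U * (Matrix.diagonal (fun i => Real.sqrt (hM.1.eigenvalues i + ε))
          * (star U * U) * Matrix.diagonal (fun i => Real.sqrt (hM.1.eigenvalues i + ε))) * star U := by
          noncomm_ring
      _ = U * Matrix.diagonal (fun i => hM.1.eigenvalues i + ε) * star U := by
          rw [hU, mul_one, hd]
  rw [key]
  have hdd : Matrix.diagonal (fun i => hM.1.eigenvalues i + ε)
      = Matrix.diagonal (RCLike.ofReal ∘ hM.1.eigenvalues) + ε • (1 : Matrix (Fin n) (Fin n) ℝ) := by
    rw [Matrix.smul_one_eq_diagonal, ← Matrix.diagonal_add]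
    rfl
  have hspec := hM.1.spectral_theorem
  rw [Unitary.conjStarAlgAut_apply] at hspec
  rw [hdd, mul_add, add_mul, ← hspec]
  congr 1
  rw [mul_smul_comm, mul_one, smul_mul_assoc, hU']

lemma msqrt_pert {M : Matrix (Fin n) (Fin n) ℝ} (hM : M.PosSemidef) {ε : ℝ} (hε : 0 ≤ ε) :
    msqrt (M + ε • 1) = pertSqrt hM ε :=
  msqrt_unique (hM.add (smul_one_posSemidef hε)) (pertSqrt_posSemidef hM hε) (pertSqrt_sq hM hε)

lemma pertSqrt_zero {M : Matrix (Fin n) (Fin n) ℝ} (hM : M.PosSemidef) :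
    pertSqrt hM 0 = msqrt M := by
  have h := msqrt_pert hM (le_refl 0)
  rw [zero_smul, add_zero] at h
  exact h.symm

lemma kron_mulVec (S T : Matrix (Fin n) (Fin n) ℝ) (K : Matrix (Fin n) (Fin n) ℝ) :
    ((S ⊗ₖ T) *ᵥ (fun p : Fin n × Fin n => K p.1 p.2))
      = fun p : Fin n × Fin n => (S * K * Tᵀ) p.1 p.2 := by
  funext p
  simp only [Matrix.mulVec, dotProduct, Matrix.kroneckerMap_apply, Fintype.sum_prod_type,
    Matrix.mul_apply, Matrix.transpose_apply, Finset.sum_mul, Finset.mul_sum]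
  rw [Finset.sum_comm]
  exact Finset.sum_congr rfl fun k _ => Finset.sum_congr rfl fun l _ => by ring

lemma vec_dot (K M : Matrix (Fin n) (Fin n) ℝ) :
    (fun p : Fin n × Fin n => K p.1 p.2) ⬝ᵥ (fun p : Fin n × Fin n => M p.1 p.2)
      = Matrix.trace (Kᵀ * M) := by
  simp only [dotProduct, Fintype.sum_prod_type, Matrix.trace, Matrix.diag, Matrix.mul_apply,
    Matrix.transpose_apply]
  rw [Finset.sum_comm]

lemma trace_quadform (K S T : Matrix (Fin n) (Fin n) ℝ) (hK : Kᵀ = K) (hT : Tᵀ = T) :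
    Matrix.trace (K * S * K * T)
      = (fun p : Fin n × Fin n => K p.1 p.2) ⬝ᵥ ((S ⊗ₖ T) *ᵥ (fun p : Fin n × Fin n => K p.1 p.2)) := by
  rw [kron_mulVec, vec_dot, hK, hT]
  simp [Matrix.mul_assoc]

theorem stmt12 {n : ℕ} (K : Matrix (Fin n) (Fin n) ℝ) (hK : K.IsHermitian)
    (A₁ B₁ A₂ B₂ : Matrix (Fin n) (Fin n) ℝ)
    (hA₁ : A₁.PosSemidef) (hB₁ : B₁.PosSemidef) (hA₂ : A₂.PosSemidef) (hB₂ : B₂.PosSemidef)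
    (l : ℝ) (hl0 : 0 ≤ l) (hl1 : l ≤ 1) :
    l * Matrix.trace (K * msqrt A₁ * K * msqrt B₁)
      + (1 - l) * Matrix.trace (K * msqrt A₂ * K * msqrt B₂)
      ≤ Matrix.trace (K * msqrt (l • A₁ + (1 - l) • A₂) * K * msqrt (l • B₁ + (1 - l) • B₂)) := by
  have hKT : Kᵀ = K := herm_t hK
  have hl1' : (0:ℝ) ≤ 1 - l := by linarith
  have hCps : (l • A₁ + (1 - l) • A₂).PosSemidef :=
    (posSemidef_smul hA₁ hl0).add (posSemidef_smul hA₂ hl1')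
  have hDps : (l • B₁ + (1 - l) • B₂).PosSemidef :=
    (posSemidef_smul hB₁ hl0).add (posSemidef_smul hB₂ hl1')
  set f : ℝ → ℝ := fun ε => Matrix.trace (K * pertSqrt hCps ε * K * pertSqrt hDps ε) with hfdef
  set g : ℝ → ℝ := fun ε => l * Matrix.trace (K * pertSqrt hA₁ ε * K * pertSqrt hB₁ ε)
      + (1 - l) * Matrix.trace (K * pertSqrt hA₂ ε * K * pertSqrt hB₂ ε) with hgdef
  have hfc : Continuous f := by
    apply Continuous.matrix_trace
    exact ((continuous_const.matrix_mul (pertSqrt_continuous hCps)).matrix_mul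
      continuous_const).matrix_mul (pertSqrt_continuous hDps)
  have hgc : Continuous g := by
    apply Continuous.add
    · exact continuous_const.mul (Continuous.matrix_trace
        (((continuous_const.matrix_mul (pertSqrt_continuous hA₁)).matrix_mul
          continuous_const).matrix_mul (pertSqrt_continuous hB₁)))
    · exact continuous_const.mul (Continuous.matrix_trace
        (((continuous_const.matrix_mul (pertSqrt_continuous hA₂)).matrix_mul
          continuous_const).matrix_mul (pertSqrt_continuous hB₂)))
  have key : ∀ ε ∈ Set.Ioi (0:ℝ), g ε ≤ f ε := by
    intro ε hε
    have hε' : (0:ℝ) ≤ ε := le_of_lt hε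
    have hA₁' : (A₁ + ε • 1).PosSemidef := hA₁.add (smul_one_posSemidef hε')
    have hA₂' : (A₂ + ε • 1).PosSemidef := hA₂.add (smul_one_posSemidef hε')
    have hB₁' : (B₁ + ε • 1).PosSemidef := hB₁.add (smul_one_posSemidef hε')
    have hB₂' : (B₂ + ε • 1).PosSemidef := hB₂.add (smul_one_posSemidef hε')
    have hC' : ((l • A₁ + (1 - l) • A₂) + ε • 1).PosSemidef := hCps.add (smul_one_posSemidef hε')
    have hD' : ((l • B₁ + (1 - l) • B₂) + ε • 1).PosSemidef := hDps.add (smul_one_posSemidef hε')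
    have hsumA : l • (A₁ + ε • 1) + (1 - l) • (A₂ + ε • 1)
        = (l • A₁ + (1 - l) • A₂) + ε • (1 : Matrix (Fin n) (Fin n) ℝ) := by
      rw [smul_add, smul_add, smul_smul, smul_smul, add_add_add_comm, ← add_smul,
        show l * ε + (1 - l) * ε = ε by ring]
    have hsumB : l • (B₁ + ε • 1) + (1 - l) • (B₂ + ε • 1)
        = (l • B₁ + (1 - l) • B₂) + ε • (1 : Matrix (Fin n) (Fin n) ℝ) := by
      rw [smul_add, smul_add, smul_smul, smul_smul, add_add_add_comm, ← add_smul,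
        show l * ε + (1 - l) * ε = ε by ring]
    have hXps : (l • (A₁ + ε • 1)).PosSemidef := posSemidef_smul hA₁' hl0
    have hYps : ((1 - l) • (A₂ + ε • 1)).PosSemidef := posSemidef_smul hA₂' hl1'
    have hUps : (l • (B₁ + ε • 1)).PosSemidef := posSemidef_smul hB₁' hl0
    have hVps : ((1 - l) • (B₂ + ε • 1)).PosSemidef := posSemidef_smul hB₂' hl1'
    have hCPD : (l • (A₁ + ε • 1) + (1 - l) • (A₂ + ε • 1)).PosDef := by
      rw [hsumA]; exact Matrix.PosDef.posSemidef_add hCps (smul_one_posDef hε)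
    have hDPD : (l • (B₁ + ε • 1) + (1 - l) • (B₂ + ε • 1)).PosDef := by
      rw [hsumB]; exact Matrix.PosDef.posSemidef_add hDps (smul_one_posDef hε)
    have h := superadd hXps hYps hUps hVps hCPD hDPD (fun p : Fin n × Fin n => K p.1 p.2)
    rw [hsumA, hsumB] at h
    rw [msqrt_smul hA₁' hl0, msqrt_smul hB₁' hl0, msqrt_smul hA₂' hl1',
      msqrt_smul hB₂' hl1'] at h
    rw [Matrix.smul_kronecker, Matrix.kronecker_smul, Matrix.smul_kronecker,
      Matrix.kronecker_smul, smul_smul, smul_smul, Real.mul_self_sqrt hl0,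
      Real.mul_self_sqrt hl1'] at h
    rw [Matrix.add_mulVec, Matrix.smul_mulVec, Matrix.smul_mulVec,
      dotProduct_add, dotProduct_smul, dotProduct_smul, smul_eq_mul, smul_eq_mul] at h
    simp only [hgdef, hfdef]
    rw [← msqrt_pert hA₁ hε', ← msqrt_pert hB₁ hε', ← msqrt_pert hA₂ hε',
      ← msqrt_pert hB₂ hε', ← msqrt_pert hCps hε', ← msqrt_pert hDps hε']
    rw [trace_quadform K _ _ hKT (msqrt_t hB₁'), trace_quadform K _ _ hKT (msqrt_t hB₂'),
      trace_quadform K _ _ hKT (msqrt_t hD')]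
    exact h
  have hg0 : Filter.Tendsto g (nhdsWithin 0 (Set.Ioi 0)) (nhds (g 0)) :=
    (hgc.tendsto 0).mono_left nhdsWithin_le_nhds
  have hf0 : Filter.Tendsto f (nhdsWithin 0 (Set.Ioi 0)) (nhds (f 0)) :=
    (hfc.tendsto 0).mono_left nhdsWithin_le_nhds
  have hle : g 0 ≤ f 0 :=
    le_of_tendsto_of_tendsto hg0 hf0 (Filter.eventually_iff_exists_mem.mpr
      ⟨Set.Ioi 0, self_mem_nhdsWithin, key⟩)
  rw [hgdef, hfdef] at hle
  simp only [pertSqrt_zero] at hle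
  exact hle
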